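/- Let ε be a random variable with continuous distribution function F, continuous density f, finite mean, and let F⁻¹ be differentiable on (0,1). Define g(τ) := E[ρ_τ(ε − F⁻¹(τ))]. Then g is differentiable on (0,1) with g′(τ) = E[ε] − F⁻¹(τ). -/

import Mathlib

open MeasureTheory

/-- The check function of quantile regression: ρ_τ(u) = u(τ − 1{u<0}). -/
noncomputable def check (τ u : ℝ) : ℝ := u * (τ - if u < 0 then 1 else 0)

open Set Filter

-- auxiliary: pointwise formula
lemma check_eq_aux (τ u : ℝ) : u * (τ - if u < 0 then 1 else 0) = τ * u + max (-u) 0 := by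
  by_cases h : u < 0
  · rw [if_pos h, max_eq_left (by linarith)]; ring
  · rw [if_neg h, max_eq_right (by linarith)]; ring

lemma maxdiff_eq (e a b : ℝ) (hab : a ≤ b) :
    max (b - e) 0 - max (a - e) 0
      = ∫ u, (if e ≤ u then (1:ℝ) else 0) ∂(volume.restrict (Set.Ioc a b)) := by
  have hind : (fun u => if e ≤ u then (1:ℝ) else 0) = (Set.Ici e).indicator (fun _ => 1) := by
    funext u; simp [Set.indicator_apply]
  rw [hind, integral_indicator_const _ measurableSet_Ici, measureReal_def,
    Measure.restrict_apply measurableSet_Ici, smul_eq_mul, mul_one]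
  rcases le_or_gt e a with h1 | h1
  · have hs : Set.Ici e ∩ Set.Ioc a b = Set.Ioc a b := by
      ext u; simp only [Set.mem_inter_iff, Set.mem_Ici, Set.mem_Ioc]
      constructor
      · tauto
      · intro h; exact ⟨by linarith [h.1], h⟩
    rw [hs, Real.volume_Ioc, ENNReal.toReal_ofReal (by linarith),
      max_eq_left (by linarith), max_eq_left (by linarith)]
    ring
  · rcases le_or_gt e b with h2 | h2
    · have hs : Set.Ici e ∩ Set.Ioc a b = Set.Icc e b := by
        ext u; simp only [Set.mem_inter_iff, Set.mem_Ici, Set.mem_Ioc, Set.mem_Icc]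
        constructor
        · tauto
        · intro h; exact ⟨h.1, by linarith [h.1], h.2⟩
      rw [hs, Real.volume_Icc, ENNReal.toReal_ofReal (by linarith),
        max_eq_left (by linarith), max_eq_right (by linarith)]
      ring
    · have hs : Set.Ici e ∩ Set.Ioc a b = ∅ := by
        ext u; simp only [Set.mem_inter_iff, Set.mem_Ici, Set.mem_Ioc, Set.mem_empty_iff_false,
          iff_false, not_and]
        intro h3 h4 h5; linarith
      rw [hs, measure_empty, ENNReal.toReal_zero,
        max_eq_right (by linarith), max_eq_right (by linarith)]
      ring

lemma phi_diff {Ω : Type*} [MeasurableSpace Ω] (μ : Measure Ω) [IsProbabilityMeasure μ]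
    (ε : Ω → ℝ) (hε : Measurable ε) (hint : Integrable ε μ)
    (F : ℝ → ℝ) (hF : ∀ x, F x = (μ {ω | ε ω ≤ x}).toReal) (a b : ℝ) (hab : a ≤ b) :
    (∫ ω, max (b - ε ω) 0 ∂μ) - (∫ ω, max (a - ε ω) 0 ∂μ) = ∫ u in a..b, F u := by
  haveI : IsFiniteMeasure (volume.restrict (Set.Ioc a b)) :=
    ⟨by rw [Measure.restrict_apply_univ]; exact measure_Ioc_lt_top⟩
  have hI : ∀ t : ℝ, Integrable (fun ω => max (t - ε ω) 0) μ := fun t =>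
    ((integrable_const t).sub hint).sup (integrable_const 0)
  have hs : MeasurableSet {p : Ω × ℝ | ε p.1 ≤ p.2} :=
    measurableSet_le (hε.comp measurable_fst) measurable_snd
  have hprod : Integrable (Function.uncurry fun ω u => if ε ω ≤ u then (1:ℝ) else 0)
      (μ.prod (volume.restrict (Set.Ioc a b))) := by
    have : (Function.uncurry fun ω u => if ε ω ≤ u then (1:ℝ) else 0)
        = ({p : Ω × ℝ | ε p.1 ≤ p.2}).indicator (fun _ => 1) := by
      funext p; simp [Function.uncurry, Set.indicator_apply, Set.mem_setOf_eq]
    rw [this]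
    exact (integrable_const 1).indicator hs
  calc (∫ ω, max (b - ε ω) 0 ∂μ) - (∫ ω, max (a - ε ω) 0 ∂μ)
      = ∫ ω, (max (b - ε ω) 0 - max (a - ε ω) 0) ∂μ := (integral_sub (hI b) (hI a)).symm
    _ = ∫ ω, ∫ u, (if ε ω ≤ u then (1:ℝ) else 0) ∂(volume.restrict (Set.Ioc a b)) ∂μ := by
        refine integral_congr_ae (Filter.Eventually.of_forall fun ω => ?_)
        exact maxdiff_eq (ε ω) a b hab
    _ = ∫ u, ∫ ω, (if ε ω ≤ u then (1:ℝ) else 0) ∂μ ∂(volume.restrict (Set.Ioc a b)) :=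
        integral_integral_swap hprod
    _ = ∫ u, F u ∂(volume.restrict (Set.Ioc a b)) := by
        refine integral_congr_ae (Filter.Eventually.of_forall fun u => ?_)
        have h1 : (fun ω => if ε ω ≤ u then (1:ℝ) else 0)
            = ({ω | ε ω ≤ u}).indicator (fun _ => 1) := by
          funext ω; simp [Set.indicator_apply, Set.mem_setOf_eq]
        show (∫ ω, (if ε ω ≤ u then (1:ℝ) else 0) ∂μ) = F u
        rw [h1, integral_indicator_const _ (measurableSet_le hε measurable_const), smul_eq_mul, mul_one, hF, measureReal_def]
    _ = ∫ u in a..b, F u := (intervalIntegral.integral_of_le hab).symm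

/-- If ε has continuous distribution function F with continuous density f, finite mean,
and differentiable quantile function F⁻¹, then g(τ) = E[ρ_τ(ε − F⁻¹(τ))] is differentiable
on (0,1) with derivative g′(τ) = E[ε] − F⁻¹(τ). -/
theorem deriv_expected_SRAR
    {Ω : Type*} [MeasurableSpace Ω] (μ : Measure Ω) [IsProbabilityMeasure μ]
    (ε : Ω → ℝ) (hε : Measurable ε) (hint : Integrable ε μ)
    (F f Finv : ℝ → ℝ)
    (hF : ∀ x, F x = (μ {ω | ε ω ≤ x}).toReal)
    (hFcont : Continuous F)
    (hfcont : Continuous f)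
    (hFderiv : ∀ x, HasDerivAt F (f x) x)
    (hFinv : ∀ τ ∈ Set.Ioo (0:ℝ) 1, Finv τ = sInf {x | τ ≤ F x})
    (hFinvdiff : ∀ τ ∈ Set.Ioo (0:ℝ) 1, DifferentiableAt ℝ Finv τ)
    (g : ℝ → ℝ)
    (hg : ∀ τ, g τ = ∫ ω, check τ (ε ω - Finv τ) ∂μ) :
    ∀ τ ∈ Set.Ioo (0:ℝ) 1, HasDerivAt g ((∫ ω, ε ω ∂μ) - Finv τ) τ := by
  intro τ hτ
  set M : ℝ := ∫ ω, ε ω ∂μ with hM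
  set φ : ℝ → ℝ := fun t => ∫ ω, max (t - ε ω) 0 ∂μ with hφ
  have hI : ∀ t : ℝ, Integrable (fun ω => max (t - ε ω) 0) μ := fun t =>
    ((integrable_const t).sub hint).sup (integrable_const 0)
  -- φ derivative
  have hφ0 : ∀ t, φ t = φ 0 + ∫ u in (0:ℝ)..t, F u := by
    intro t
    rcases le_or_gt 0 t with h | h
    · have := phi_diff μ ε hε hint F hF 0 t h
      simp only [hφ] at this ⊢
      linarith
    · have h1 := phi_diff μ ε hε hint F hF t 0 h.le
      have h2 : (∫ u in (0:ℝ)..t, F u) = -∫ u in t..(0:ℝ), F u :=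
        intervalIntegral.integral_symm t 0
      simp only [hφ] at h1 ⊢
      linarith
  have hφd : ∀ t, HasDerivAt φ (F t) t := by
    intro t
    have h1 : HasDerivAt (fun s => φ 0 + ∫ u in (0:ℝ)..s, F u) (F t) t := by
      have := intervalIntegral.integral_hasDerivAt_right (a := 0) (b := t)
        (hFcont.intervalIntegrable 0 t)
        (hFcont.stronglyMeasurableAtFilter _ _) hFcont.continuousAt
      simpa using (this.const_add (φ 0))
    exact (funext hφ0 : φ = _) ▸ h1
  -- F is monotone
  have hmono : Monotone F := by
    intro x y hxy
    rw [hF x, hF y]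
    exact ENNReal.toReal_mono (measure_ne_top _ _)
      (measure_mono fun ω hω => le_trans hω hxy)
  -- limits via cdf
  have hνP : IsProbabilityMeasure (μ.map ε) := Measure.isProbabilityMeasure_map hε.aemeasurable
  have hFcdf : F = ProbabilityTheory.cdf (μ.map ε) := by
    funext x
    rw [hF, ProbabilityTheory.cdf_eq_real, measureReal_def, Measure.map_apply hε measurableSet_Iic]
    rfl
  have htop : ∃ x, τ ≤ F x := by
    have := (ProbabilityTheory.tendsto_cdf_atTop (μ.map ε)).eventually
      (eventually_gt_nhds hτ.2)
    rw [← hFcdf] at this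
    exact this.exists.imp fun x hx => hx.le
  have hbot : ∃ x, F x < τ := by
    have := (ProbabilityTheory.tendsto_cdf_atBot (μ.map ε)).eventually
      (eventually_lt_nhds hτ.1)
    rw [← hFcdf] at this
    exact this.exists
  -- F (Finv τ) = τ
  have hbdd : BddBelow {x | τ ≤ F x} := by
    obtain ⟨x₀, hx₀⟩ := hbot
    refine ⟨x₀, fun y hy => ?_⟩
    by_contra hc
    exact absurd (lt_of_le_of_lt (hmono (le_of_not_ge hc)) hx₀) (not_lt.mpr hy)
  have hne : Set.Nonempty {x | τ ≤ F x} := htop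
  have hclosed : IsClosed {x | τ ≤ F x} := isClosed_le continuous_const hFcont
  have hmem : τ ≤ F (Finv τ) := by
    rw [hFinv τ hτ]
    exact hclosed.csInf_mem hne hbdd
  have hFFinv : F (Finv τ) = τ := by
    by_contra hc
    have hlt : τ < F (Finv τ) := lt_of_le_of_ne hmem (Ne.symm hc)
    have hev : ∀ᶠ x in nhdsWithin (Finv τ) (Set.Iio (Finv τ)), τ < F x :=
      (hFcont.continuousAt.eventually (eventually_gt_nhds hlt)).filter_mono
        nhdsWithin_le_nhds
    obtain ⟨x, hx1, hx2⟩ := (hev.and self_mem_nhdsWithin).exists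
    have : Finv τ ≤ x := by
      rw [hFinv τ hτ]
      exact csInf_le hbdd hx1.le
    exact absurd hx2 (not_lt.mpr this)
  -- rewrite g
  have hgeq : g = fun s => s * (M - Finv s) + φ (Finv s) := by
    funext s
    rw [hg s]
    have hpt : (fun ω => check s (ε ω - Finv s))
        = fun ω => s * (ε ω - Finv s) + max (Finv s - ε ω) 0 := by
      funext ω
      rw [check, check_eq_aux, neg_sub]
    have int1 : Integrable (fun ω => s * (ε ω - Finv s)) μ :=
      ((hint.sub (integrable_const _)).const_mul s : _)
    rw [hpt, integral_add int1 (hI (Finv s)),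
      integral_const_mul, integral_sub hint (integrable_const _), integral_const]
    simp [hM, hφ]
  -- assemble derivative
  obtain ⟨q', hq⟩ : ∃ q', HasDerivAt Finv q' τ :=
    ⟨deriv Finv τ, (hFinvdiff τ hτ).hasDerivAt⟩
  have h1 : HasDerivAt (fun s => s * (M - Finv s))
      (1 * (M - Finv τ) + τ * (0 - q')) τ :=
    (hasDerivAt_id τ).mul ((hasDerivAt_const τ M).sub hq)
  have h2 : HasDerivAt (fun s => φ (Finv s)) (F (Finv τ) * q') τ :=
    (hφd (Finv τ)).comp τ hq
  rw [hgeq]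
  have : HasDerivAt (fun s => s * (M - Finv s) + φ (Finv s))
      (1 * (M - Finv τ) + τ * (0 - q') + F (Finv τ) * q') τ := h1.add h2
  rw [hFFinv] at this
  convert this using 1
  ring
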